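/- Let d ≥ 2 be an integer. If q ∈ (0, 1/d) satisfies ∑_{k ≥ 1} (dq)^k ∏_{i=1}^{k-1} (1 − q^i) = 1 (the case c = 1 of the criticality equation), then 1/(2d − 1/4) ≤ q holds for all d ≥ 2, i.e., q ≥ 4/(8d − 1). -/

import Mathlib

theorem stmt_19 (d : ℕ) (hd : 2 ≤ d) (q : ℝ) (hq : 0 < q) (hqd : q < 1 / (d : ℝ))
    (hcrit : ∑' k : ℕ, ((d : ℝ) * q) ^ (k + 1) * ∏ i ∈ Finset.Icc 1 k, (1 - q ^ i) = 1) :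
    1 / (2 * (d : ℝ) - 1 / 4) ≤ q := by
  have hd2 : (2 : ℝ) ≤ (d : ℝ) := by exact_mod_cast hd
  have hd0 : (0 : ℝ) < (d : ℝ) := by linarith
  set x : ℝ := (d : ℝ) * q with hxdef
  have hx0 : 0 < x := mul_pos hd0 hq
  have hx1 : x < 1 := by
    have h := mul_lt_mul_of_pos_left hqd hd0
    rw [mul_one_div, div_self (ne_of_gt hd0)] at h
    exact h
  have hq1 : q < 1 := by
    have : 1 / (d : ℝ) ≤ 1 / 2 := by
      apply one_div_le_one_div_of_le <;> linarith
    linarith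
  set P : ℕ → ℝ := fun k => ∏ i ∈ Finset.Icc 1 k, (1 - q ^ i) with hPdef
  have hPnn : ∀ k, 0 ≤ P k := by
    intro k
    apply Finset.prod_nonneg
    intro i hi
    have : q ^ i ≤ 1 := pow_le_one₀ hq.le hq1.le
    linarith
  have hP1 : ∀ k, P k ≤ 1 := by
    intro k
    apply Finset.prod_le_one
    · intro i hi
      have : q ^ i ≤ 1 := pow_le_one₀ hq.le hq1.le
      linarith
    · intro i hi
      have : 0 ≤ q ^ i := pow_nonneg hq.le i
      linarith
  have hPle : ∀ k, P (k + 1) ≤ 1 - q := by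
    intro k
    have h1 : P (k + 1) ≤ ∏ i ∈ Finset.Icc 1 (k + 1),
        (if i = 1 then 1 - q else 1) := by
      apply Finset.prod_le_prod
      · intro i hi
        have : q ^ i ≤ 1 := pow_le_one₀ hq.le hq1.le
        linarith
      · intro i hi
        by_cases h : i = 1
        · simp [h, pow_one]
        · simp [h]
          have : 0 ≤ q ^ i := pow_nonneg hq.le i
          linarith
    have h2 : ∏ i ∈ Finset.Icc 1 (k + 1), (if i = 1 then 1 - q else 1)
        = 1 - q := by
      rw [Finset.prod_ite_eq']
      simp
    linarith [h1, h2.le, h2.ge]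
  set a : ℕ → ℝ := fun k => x ^ (k + 1) * P k with hadef
  have hann : ∀ k, 0 ≤ a k := fun k =>
    mul_nonneg (pow_nonneg hx0.le _) (hPnn k)
  have hgeo : Summable fun k : ℕ => x ^ k :=
    summable_geometric_of_lt_one hx0.le hx1
  have hb : Summable fun k : ℕ => x ^ (k + 1) := by
    simpa [pow_succ] using hgeo.mul_right x
  have ha : Summable a := by
    apply Summable.of_nonneg_of_le hann _ hb
    intro k
    calc a k ≤ x ^ (k + 1) * 1 := by
          apply mul_le_mul_of_nonneg_left (hP1 k) (pow_nonneg hx0.le _)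
      _ = x ^ (k + 1) := mul_one _
  have hsplit : (∑' k : ℕ, a k) = a 0 + ∑' k : ℕ, a (k + 1) :=
    Summable.tsum_eq_zero_add ha
  have ha0 : a 0 = x := by simp [hadef, hPdef]
  have htail_le : (∑' k : ℕ, a (k + 1)) ≤ (1 - q) * x ^ 2 * (1 - x)⁻¹ := by
    have hsum1 : Summable fun k : ℕ => a (k + 1) :=
      (summable_nat_add_iff 1).mpr ha
    have hsum2 : Summable fun k : ℕ => (1 - q) * x ^ 2 * x ^ k :=
      hgeo.mul_left _
    have hle : ∀ k : ℕ, a (k + 1) ≤ (1 - q) * x ^ 2 * x ^ k := by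
      intro k
      have h1 : a (k + 1) = x ^ (k + 2) * P (k + 1) := rfl
      have h2 : x ^ (k + 2) * P (k + 1) ≤ x ^ (k + 2) * (1 - q) :=
        mul_le_mul_of_nonneg_left (hPle k) (pow_nonneg hx0.le _)
      have h3 : x ^ (k + 2) * (1 - q) = (1 - q) * x ^ 2 * x ^ k := by ring
      linarith [h1.le, h1.ge]
    calc (∑' k : ℕ, a (k + 1)) ≤ ∑' k : ℕ, (1 - q) * x ^ 2 * x ^ k :=
          Summable.tsum_le_tsum hle hsum1 hsum2
      _ = (1 - q) * x ^ 2 * ∑' k : ℕ, x ^ k := tsum_mul_left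
      _ = (1 - q) * x ^ 2 * (1 - x)⁻¹ := by
          rw [tsum_geometric_of_lt_one hx0.le hx1]
  have hkey : 1 ≤ x + (1 - q) * x ^ 2 * (1 - x)⁻¹ := by
    rw [hcrit] at hsplit
    linarith [hsplit, htail_le, ha0.le, ha0.ge]
  have h1x : 0 < 1 - x := by linarith
  have hkey2 : 1 - x ≤ x * (1 - x) + (1 - q) * x ^ 2 := by
    have h5 := mul_le_mul_of_nonneg_right hkey h1x.le
    have h6 : (1 - q) * x ^ 2 * (1 - x)⁻¹ * (1 - x) = (1 - q) * x ^ 2 := by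
      field_simp
    nlinarith [h5, h6]
  -- hence 1 + q * x^2 ≤ 2 x
  have hmain : 1 + q * x ^ 2 ≤ 2 * x := by nlinarith [hkey2]
  -- x > 1/2
  have hx_half : 1 ≤ 2 * x := by nlinarith [sq_nonneg x, mul_pos hq (mul_pos hx0 hx0)]
  -- q/4 ≤ q * x^2
  have hq4 : q / 4 ≤ q * x ^ 2 := by
    nlinarith [mul_nonneg (mul_nonneg hq.le (by linarith : (0:ℝ) ≤ 2 * x - 1))
      (by linarith : (0:ℝ) ≤ 2 * x + 1)]
  have hfin : 1 ≤ q * (2 * (d : ℝ) - 1 / 4) := by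
    have : 1 + q / 4 ≤ 2 * x := by linarith
    rw [hxdef] at this
    nlinarith [this]
  have hpos : 0 < 2 * (d : ℝ) - 1 / 4 := by linarith
  rw [div_le_iff₀ hpos]
  linarith [hfin]
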